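/- arXiv:1209.0939 — 3 statements merged into one kernel-verified Lean document; each statement's English description precedes it below -/
import Mathlib

section
/- Fix real numbers α, β with 0 ≤ α < β ≤ 2π. For a natural number n, let I_n = { r·e^{iθ} ∈ ℂ : α ≤ θ ≤ β and e^{-(n+1)} ≤ 1 − r ≤ e^{-n} } (a sector of a thin annulus inside the unit disc). Then there exist δ > 0 and N_0 ∈ ℕ such that for all n ≥ N_0, the integral of the function z ↦ (1 − |z|²)^{−2} over I_n with respect to the Lebesgue measure on ℂ ≅ ℝ² is at least δ · e^n. (This integral is the hyperbolic area of I_n for the Poincaré metric on the unit disc.) -/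
open MeasureTheory

private lemma aux_r (n : ℕ) {r : ℝ} (h1 : Real.exp (-(n + 1 : ℝ)) ≤ 1 - r)
    (h2 : 1 - r ≤ Real.exp (-(n : ℝ))) :
    0 ≤ r ∧ r ≤ 1 ∧ Real.exp (-(n + 1 : ℝ)) ≤ 1 - r ^ 2 ∧
      1 - r ^ 2 ≤ 2 * Real.exp (-(n : ℝ)) := by
  have e1 : Real.exp (-(n : ℝ)) ≤ 1 := by
    rw [Real.exp_le_one_iff]
    simp
  have e2 : 0 < Real.exp (-(n + 1 : ℝ)) := Real.exp_pos _
  have hr0 : 0 ≤ r := by linarith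
  have hr1 : r ≤ 1 := by linarith
  refine ⟨hr0, hr1, by nlinarith, by nlinarith⟩

private lemma aux_abs (r θ : ℝ) (hr : 0 ≤ r) :
    ‖(r : ℂ) * Complex.exp (θ * Complex.I)‖ = r := by
  rw [norm_mul, Complex.norm_real, Complex.norm_exp]
  simp [abs_of_nonneg hr]

private lemma aux_fbounds (n : ℕ) {r : ℝ} (h1 : Real.exp (-(n + 1 : ℝ)) ≤ 1 - r)
    (h2 : 1 - r ≤ Real.exp (-(n : ℝ))) :
    ((2 * Real.exp (-(n : ℝ))) ^ 2)⁻¹ ≤ ((1 - r ^ 2) ^ 2)⁻¹ ∧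
      ((1 - r ^ 2) ^ 2)⁻¹ ≤ ((Real.exp (-(n + 1 : ℝ))) ^ 2)⁻¹ := by
  obtain ⟨hr0, hr1, hA1, hA2⟩ := aux_r n h1 h2
  have hApos : 0 < 1 - r ^ 2 := lt_of_lt_of_le (Real.exp_pos _) hA1
  have he : 0 < Real.exp (-(n + 1 : ℝ)) := Real.exp_pos _
  constructor
  · exact inv_anti₀ (by positivity) (by nlinarith)
  · exact inv_anti₀ (by positivity) (by nlinarith)

private lemma aux_symm (p : ℝ × ℝ) :
    Complex.polarCoord.symm p = (p.1 : ℂ) * Complex.exp ((p.2 : ℂ) * Complex.I) := by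
  rw [Complex.polarCoord_symm_apply, Complex.exp_mul_I]
  simp [Complex.ofReal_cos, Complex.ofReal_sin]

private lemma aux_angle (α β : ℝ) (h0 : 0 ≤ α) (hαβ : α < β) (hβ : β ≤ 2 * Real.pi) :
    ∃ c d : ℝ, -Real.pi < c ∧ c < d ∧ d < Real.pi ∧
      ∀ θ : ℝ, c ≤ θ → θ ≤ d → ∃ θ', α ≤ θ' ∧ θ' ≤ β ∧
        Complex.exp ((θ : ℂ) * Complex.I) = Complex.exp ((θ' : ℂ) * Complex.I) := by
  have hπ := Real.pi_pos
  by_cases hα : α < Real.pi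
  · have hm1 : α < min β Real.pi := lt_min hαβ hα
    have hm2 : min β Real.pi ≤ β := min_le_left _ _
    have hm3 : min β Real.pi ≤ Real.pi := min_le_right _ _
    exact ⟨α, (α + min β Real.pi) / 2, by linarith, by linarith, by linarith,
      fun θ hc hd => ⟨θ, by linarith, by linarith, rfl⟩⟩
  · push_neg at hα
    refine ⟨(α + β) / 2 - 2 * Real.pi, β - 2 * Real.pi, by linarith, by linarith, by linarith, ?_⟩
    intro θ hc hd
    refine ⟨θ + 2 * Real.pi, by linarith, by linarith, ?_⟩
    have h : ((θ + 2 * Real.pi : ℝ) : ℂ) * Complex.I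
        = (θ : ℂ) * Complex.I + 2 * (Real.pi : ℂ) * Complex.I := by push_cast; ring
    rw [h, Complex.exp_add, Complex.exp_two_pi_mul_I, mul_one]

theorem hyperbolic_area_annulus_sector (α β : ℝ) (h0 : 0 ≤ α) (hαβ : α < β)
    (hβ : β ≤ 2 * Real.pi) :
    ∃ (δ : ℝ) (N₀ : ℕ), 0 < δ ∧ ∀ n : ℕ, N₀ ≤ n →
      δ * Real.exp n ≤
        ∫ z in {z : ℂ | ∃ r θ : ℝ, α ≤ θ ∧ θ ≤ β ∧
            Real.exp (-(n + 1 : ℝ)) ≤ 1 - r ∧ 1 - r ≤ Real.exp (-(n : ℝ)) ∧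
            z = (r : ℂ) * Complex.exp (θ * Complex.I)},
          ((1 - ‖z‖ ^ 2) ^ 2)⁻¹ := by
  obtain ⟨c, d, hc, hcd, hd, hangle⟩ := aux_angle α β h0 hαβ hβ
  have hπ := Real.pi_pos
  have he₁lt : Real.exp (-1 : ℝ) < 1 := by rw [Real.exp_lt_one_iff]; norm_num
  have he₁half : Real.exp (-1 : ℝ) ≤ 1 / 2 := by
    have h2e : (2 : ℝ) < Real.exp 1 := lt_trans (by norm_num) Real.exp_one_gt_d9
    rw [Real.exp_neg]
    calc (Real.exp 1)⁻¹ ≤ 2⁻¹ := inv_anti₀ (by norm_num) h2e.le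
      _ = 1 / 2 := by norm_num
  refine ⟨(1 - Real.exp (-1 : ℝ)) * (d - c) / 8, 1, by nlinarith, ?_⟩
  intro n hn
  have hn1 : (1 : ℝ) ≤ (n : ℝ) := by exact_mod_cast hn
  set f : ℂ → ℝ := fun z => ((1 - ‖z‖ ^ 2) ^ 2)⁻¹ with hfdef
  set S : Set ℂ := {z : ℂ | ∃ r θ : ℝ, α ≤ θ ∧ θ ≤ β ∧
      Real.exp (-(n + 1 : ℝ)) ≤ 1 - r ∧ 1 - r ≤ Real.exp (-(n : ℝ)) ∧
      z = (r : ℂ) * Complex.exp (θ * Complex.I)} with hSdef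
  have hEpos : 0 < Real.exp (-(n : ℝ)) := Real.exp_pos _
  have hE1 : Real.exp (-(n : ℝ)) ≤ Real.exp (-1 : ℝ) := Real.exp_le_exp.mpr (by linarith)
  set r₁ : ℝ := 1 - Real.exp (-(n : ℝ)) with hr₁def
  set r₂ : ℝ := 1 - Real.exp (-(n + 1 : ℝ)) with hr₂def
  have hr₁half : 1 / 2 ≤ r₁ := by rw [hr₁def]; linarith
  have hr₁pos : 0 < r₁ := by linarith
  have hr₁₂ : r₁ < r₂ := by
    rw [hr₁def, hr₂def]
    have : Real.exp (-(n + 1 : ℝ)) < Real.exp (-(n : ℝ)) := Real.exp_lt_exp.mpr (by linarith)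
    linarith
  have hr₂le1 : r₂ ≤ 1 := by
    rw [hr₂def]; linarith [Real.exp_pos (-(n + 1 : ℝ))]
  -- S is compact, hence measurable
  have hSimg : S = (fun p : ℝ × ℝ => ((p.1 : ℂ) * Complex.exp ((p.2 : ℂ) * Complex.I) : ℂ)) ''
      (Set.Icc r₁ r₂ ×ˢ Set.Icc α β) := by
    ext z
    simp only [hSdef, Set.mem_setOf_eq, Set.mem_image, Set.mem_prod, Set.mem_Icc]
    constructor
    · rintro ⟨r, θ, h1, h2, h3, h4, h5⟩
      exact ⟨(r, θ), ⟨⟨by rw [hr₁def]; linarith, by rw [hr₂def]; linarith⟩, h1, h2⟩, h5.symm⟩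
    · rintro ⟨⟨r, θ⟩, ⟨⟨ha, hb⟩, hc', hd'⟩, rfl⟩
      rw [hr₁def] at ha; rw [hr₂def] at hb
      exact ⟨r, θ, hc', hd', by linarith, by linarith, rfl⟩
  have hScompact : IsCompact S := by
    rw [hSimg]
    exact (isCompact_Icc.prod isCompact_Icc).image (by fun_prop)
  have hSmeas : MeasurableSet S := hScompact.measurableSet
  have hfmeas : Measurable f := by
    rw [hfdef]
    exact ((continuous_const.sub (continuous_norm.pow 2)).pow 2).measurable.inv
  have hfnonneg : ∀ z : ℂ, 0 ≤ f z := fun z => by rw [hfdef]; positivity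
  -- facts about points of S
  have hSfacts : ∀ z ∈ S, ‖z‖ ≤ 1 ∧ f z ≤ ((Real.exp (-(n + 1 : ℝ))) ^ 2)⁻¹ := by
    rintro z ⟨r, θ, _, _, h3, h4, rfl⟩
    obtain ⟨hr0, hr1, _, _⟩ := aux_r n h3 h4
    rw [hfdef]
    simp only [aux_abs r θ hr0]
    exact ⟨hr1, (aux_fbounds n h3 h4).2⟩
  -- integrability of the polar integrand on the polar target
  set g : ℝ × ℝ → ℝ := fun p => p.1 • (S.indicator f) (Complex.polarCoord.symm p) with hgdef
  have hsymm_cont : Continuous (fun p : ℝ × ℝ => Complex.polarCoord.symm p) := by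
    simp only [aux_symm]; fun_prop
  have hgmeas : Measurable g := by
    rw [hgdef]
    exact measurable_fst.smul ((hfmeas.indicator hSmeas).comp hsymm_cont.measurable)
  set box : Set (ℝ × ℝ) := Set.Icc 0 1 ×ˢ Set.Icc (-Real.pi) Real.pi with hboxdef
  have hbox_meas : MeasurableSet box := measurableSet_Icc.prod measurableSet_Icc
  have hGint : Integrable (box.indicator fun _ => ((Real.exp (-(n + 1 : ℝ))) ^ 2)⁻¹) := by
    rw [integrable_indicator_iff hbox_meas]
    exact integrableOn_const ((isCompact_Icc.prod isCompact_Icc).measure_lt_top.ne)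
  have hgint : IntegrableOn g polarCoord.target := by
    apply Integrable.mono' hGint.restrict (hgmeas.aestronglyMeasurable.restrict)
    filter_upwards [ae_restrict_mem polarCoord.open_target.measurableSet] with p hp
    rw [polarCoord_target] at hp
    obtain ⟨hp1, hp2⟩ := hp
    simp only [Set.mem_Ioi] at hp1
    by_cases hmem : Complex.polarCoord.symm p ∈ S
    · obtain ⟨habs, hfle⟩ := hSfacts _ hmem
      have hple1 : p.1 ≤ 1 := by
        have h := Complex.norm_polarCoord_symm p
        rw [abs_of_pos hp1] at h
        rw [← h]; exact habs
      have hbox : p ∈ box := ⟨⟨hp1.le, hple1⟩, hp2.1.le, hp2.2.le⟩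
      rw [hgdef]
      simp only [Set.indicator_of_mem hmem, Set.indicator_of_mem hbox, smul_eq_mul]
      rw [Real.norm_eq_abs, abs_of_nonneg (mul_nonneg hp1.le (hfnonneg _))]
      calc p.1 * f (Complex.polarCoord.symm p) ≤ 1 * ((Real.exp (-(n + 1 : ℝ))) ^ 2)⁻¹ :=
            mul_le_mul hple1 hfle (hfnonneg _) (by norm_num)
        _ = ((Real.exp (-(n + 1 : ℝ))) ^ 2)⁻¹ := one_mul _
    · rw [hgdef]
      simp only [Set.indicator_of_notMem hmem, smul_zero, norm_zero]
      exact Set.indicator_nonneg (fun _ _ => by positivity) p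
  have hgnonneg : 0 ≤ᵐ[volume.restrict polarCoord.target] g := by
    filter_upwards [ae_restrict_mem polarCoord.open_target.measurableSet] with p hp
    rw [polarCoord_target] at hp
    exact smul_nonneg (le_of_lt hp.1) (Set.indicator_nonneg (fun z _ => hfnonneg z) _)
  -- the rectangle in polar coordinates
  set R : Set (ℝ × ℝ) := Set.Ioo r₁ r₂ ×ˢ Set.Ioo c d with hRdef
  have hRsub : R ⊆ polarCoord.target := by
    rw [hRdef, polarCoord_target]
    rintro ⟨x, y⟩ ⟨hx, hy⟩
    exact ⟨lt_trans hr₁pos hx.1, lt_trans hc hy.1, lt_trans hy.2 hd⟩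
  have hRmeas : MeasurableSet R := measurableSet_Ioo.prod measurableSet_Ioo
  have hRvol : volume R = ENNReal.ofReal (r₂ - r₁) * ENNReal.ofReal (d - c) := by
    rw [hRdef, Measure.volume_eq_prod, Measure.prod_prod, Real.volume_Ioo, Real.volume_Ioo]
  have hRsub' : R ⊆ Set.Icc r₁ r₂ ×ˢ Set.Icc c d := by
    rw [hRdef]
    exact Set.prod_mono Set.Ioo_subset_Icc_self Set.Ioo_subset_Icc_self
  have hRfin : volume R < ⊤ :=
    lt_of_le_of_lt (measure_mono hRsub') (isCompact_Icc.prod isCompact_Icc).measure_lt_top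
  -- key pointwise lower bound on R
  have hkey : ∀ p ∈ R, r₁ * ((2 * Real.exp (-(n : ℝ))) ^ 2)⁻¹ ≤ g p := by
    rintro ⟨x, y⟩ ⟨hx, hy⟩
    have h3 : Real.exp (-(n + 1 : ℝ)) ≤ 1 - x := by
      have := hx.2; rw [hr₂def] at this; linarith
    have h4 : 1 - x ≤ Real.exp (-(n : ℝ)) := by
      have := hx.1; rw [hr₁def] at this; linarith
    have hx0 : 0 ≤ x := le_of_lt (lt_trans hr₁pos hx.1)
    obtain ⟨θ', hθ'1, hθ'2, hθ'3⟩ := hangle y hy.1.le hy.2.le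
    have hmem : Complex.polarCoord.symm (x, y) ∈ S := by
      rw [aux_symm, hSdef]
      exact ⟨x, θ', hθ'1, hθ'2, h3, h4, by rw [hθ'3]⟩
    rw [hgdef]
    simp only [Set.indicator_of_mem hmem, smul_eq_mul]
    have hfx : ((2 * Real.exp (-(n : ℝ))) ^ 2)⁻¹ ≤ f (Complex.polarCoord.symm (x, y)) := by
      rw [hfdef, aux_symm]
      simp only [aux_abs x y hx0]
      exact (aux_fbounds n h3 h4).1
    exact mul_le_mul hx.1.le hfx (by positivity) hx0
  -- putting it together
  have hmain : (r₁ * ((2 * Real.exp (-(n : ℝ))) ^ 2)⁻¹) * ((r₂ - r₁) * (d - c)) ≤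
      ∫ z in S, f z := by
    calc (r₁ * ((2 * Real.exp (-(n : ℝ))) ^ 2)⁻¹) * ((r₂ - r₁) * (d - c))
        = ∫ _ in R, r₁ * ((2 * Real.exp (-(n : ℝ))) ^ 2)⁻¹ := by
          rw [setIntegral_const, measureReal_def, hRvol, ENNReal.toReal_mul,
            ENNReal.toReal_ofReal (by linarith), ENNReal.toReal_ofReal (by linarith),
            smul_eq_mul]
          ring
      _ ≤ ∫ p in R, g p :=
          setIntegral_mono_on
            (integrableOn_const hRfin.ne) (hgint.mono_set hRsub) hRmeas hkey
      _ ≤ ∫ p in polarCoord.target, g p :=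
          setIntegral_mono_set hgint hgnonneg hRsub.eventuallyLE
      _ = ∫ z, S.indicator f z := Complex.integral_comp_polarCoord_symm (S.indicator f)
      _ = ∫ z in S, f z := integral_indicator hSmeas
  refine le_trans ?_ hmain
  -- final arithmetic
  have hsub : r₂ - r₁ = Real.exp (-(n : ℝ)) * (1 - Real.exp (-1 : ℝ)) := by
    rw [hr₁def, hr₂def, show (-(n + 1 : ℝ)) = -(n : ℝ) + (-1) by ring, Real.exp_add]
    ring
  have hinv : ((2 * Real.exp (-(n : ℝ))) ^ 2)⁻¹ = Real.exp (n : ℝ) ^ 2 / 4 := by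
    rw [Real.exp_neg]
    rw [mul_pow, inv_pow]
    field_simp
    norm_num
  have hEX : Real.exp (-(n : ℝ)) * Real.exp (n : ℝ) = 1 := by
    rw [← Real.exp_add]; simp
  rw [hsub, hinv]
  have hXpos : 0 < Real.exp (n : ℝ) := Real.exp_pos _
  have h2 : Real.exp (n : ℝ) ^ 2 * Real.exp (-(n : ℝ)) = Real.exp (n : ℝ) := by
    rw [sq, mul_assoc, mul_comm (Real.exp (n : ℝ)) (Real.exp (-(n : ℝ))), hEX, mul_one]
  have ht : 0 ≤ Real.exp (n : ℝ) * ((1 - Real.exp (-1 : ℝ)) * (d - c)) / 4 :=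
    div_nonneg (mul_nonneg hXpos.le (mul_nonneg (by linarith) (by linarith))) (by norm_num)
  have h3 := mul_le_mul_of_nonneg_right hr₁half ht
  calc (1 - Real.exp (-1 : ℝ)) * (d - c) / 8 * Real.exp (n : ℝ)
      ≤ r₁ * (Real.exp (n : ℝ) * ((1 - Real.exp (-1 : ℝ)) * (d - c)) / 4) := by nlinarith [h3]
    _ = r₁ * (Real.exp (n : ℝ) ^ 2 / 4) * (Real.exp (-(n : ℝ)) * (1 - Real.exp (-1 : ℝ)) * (d - c)) := by
        linear_combination (-(r₁ * (1 - Real.exp (-1 : ℝ)) * (d - c) / 4)) * h2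
end

section
/- Let Γ be a subgroup of SL(2,ℝ) acting on the upper half-plane ℍ by Möbius transformations. Suppose there is a compact subset K of ℍ such that ℍ = ⋃_{γ ∈ Γ} γ·K, and suppose the set S = { γ ∈ Γ : γ·K ∩ K ≠ ∅ } is finite and generates Γ. Let l : Γ → ℕ be the word length with respect to S. Let r : ℍ → Γ be any map such that x ∈ r(x)·K for every x ∈ ℍ. Then there exist real numbers λ ≥ 1 and C ≥ 0 such that for all x, y ∈ ℍ: l(r(y)^{-1} r(x))/λ − C ≤ d(x,y) ≤ λ · l(r(y)^{-1} r(x)) + C, where d is the hyperbolic distance on ℍ. -/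
open Real UpperHalfPlane

/-- The word length of `γ` with respect to a generating set `S`: the least `N` such that
`γ` is the product of a list of `N` elements of `S` (and `0` if no such `N` exists). -/
noncomputable def wordLength {G : Type*} [Group G] (S : Set G) (γ : G) : ℕ :=
  sInf {N : ℕ | ∃ l : List G, (∀ s ∈ l, s ∈ S) ∧ l.length = N ∧ l.prod = γ}


section WL
variable {G : Type*} [Group G] {S : Set G}

lemma wl_repr (hsym : ∀ s ∈ S, s⁻¹ ∈ S) (hgen : Subgroup.closure S = ⊤) (γ : G) :
    ∃ l : List G, (∀ s ∈ l, s ∈ S) ∧ l.prod = γ := by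
  have hγ : γ ∈ Subgroup.closure S := hgen ▸ Subgroup.mem_top γ
  induction hγ using Subgroup.closure_induction with
  | mem x hx => exact ⟨[x], by simp [hx]⟩
  | one => exact ⟨[], by simp⟩
  | mul x y hx hy ihx ihy =>
      obtain ⟨lx, hlx, hpx⟩ := ihx
      obtain ⟨ly, hly, hpy⟩ := ihy
      exact ⟨lx ++ ly, by
        constructor
        · intro s hs; rcases List.mem_append.1 hs with h | h
          exacts [hlx s h, hly s h]
        · simp [hpx, hpy]⟩
  | inv x hx ihx =>
      obtain ⟨lx, hlx, hpx⟩ := ihx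
      refine ⟨(lx.map fun s => s⁻¹).reverse, ?_, ?_⟩
      · intro s hs
        simp only [List.mem_reverse, List.mem_map] at hs
        obtain ⟨a, ha, rfl⟩ := hs
        exact hsym a (hlx a ha)
      · rw [← List.prod_inv_reverse, hpx]

lemma wl_le {γ : G} (l : List G) (hl : ∀ s ∈ l, s ∈ S) (hp : l.prod = γ) :
    wordLength S γ ≤ l.length :=
  Nat.sInf_le ⟨l, hl, rfl, hp⟩

lemma wl_spec {γ : G} (h : ∃ l : List G, (∀ s ∈ l, s ∈ S) ∧ l.prod = γ) :
    ∃ l : List G, (∀ s ∈ l, s ∈ S) ∧ l.length = wordLength S γ ∧ l.prod = γ := by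
  have hne : {N : ℕ | ∃ l : List G, (∀ s ∈ l, s ∈ S) ∧ l.length = N ∧ l.prod = γ}.Nonempty := by
    obtain ⟨l, hl, hp⟩ := h
    exact ⟨l.length, l, hl, rfl, hp⟩
  exact Nat.sInf_mem hne

lemma wl_mul_le {a b : G} (ha : ∃ l : List G, (∀ s ∈ l, s ∈ S) ∧ l.prod = a)
    (hb : ∃ l : List G, (∀ s ∈ l, s ∈ S) ∧ l.prod = b) :
    wordLength S (a * b) ≤ wordLength S a + wordLength S b := by
  obtain ⟨la, hla, hlena, hpa⟩ := wl_spec ha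
  obtain ⟨lb, hlb, hlenb, hpb⟩ := wl_spec hb
  calc wordLength S (a * b) ≤ (la ++ lb).length := by
        refine wl_le _ ?_ (by simp [hpa, hpb])
        intro s hs; rcases List.mem_append.1 hs with h | h
        exacts [hla s h, hlb s h]
    _ = wordLength S a + wordLength S b := by simp [hlena, hlenb]

end WL
/-- A chain of `n` unit-steps from `x` to `y`. -/
def ChainTo (x y : ℍ) (n : ℕ) (c : ℕ → ℍ) : Prop :=
  c 0 = x ∧ c n = y ∧ ∀ i < n, dist (c i) (c (i + 1)) ≤ 1

lemma chainTo_trans {x y z : ℍ} {n m : ℕ} {c d : ℕ → ℍ}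
    (h1 : ChainTo x y n c) (h2 : ChainTo y z m d) :
    ChainTo x z (n + m) (fun i => if i ≤ n then c i else d (i - n)) := by
  obtain ⟨hc0, hcn, hcs⟩ := h1
  obtain ⟨hd0, hdm, hds⟩ := h2
  refine ⟨by simpa using hc0, ?_, ?_⟩
  · by_cases hm : m = 0
    · subst hm; simpa [hcn, ← hd0]
    · have : ¬ (n + m ≤ n) := by omega
      simp only [this, if_false]
      simpa using hdm
  · intro i hi
    rcases lt_trichotomy (i + 1) (n + 1) with h | h | h
    · have h1' : i + 1 ≤ n := by omega
      have h2' : i ≤ n := by omega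
      simp only [h1', h2', if_true]
      exact hcs i (by omega)
    · have hin : i = n := by omega
      subst hin
      have h1' : ¬ (i + 1 ≤ i) := by omega
      simp only [le_refl, if_true, h1', if_false]
      have : d (i + 1 - i) = d 1 := by norm_num
      rw [this, hcn, ← hd0]
      exact hds 0 (by omega)
    · have h1' : ¬ (i + 1 ≤ n) := by omega
      have h2' : ¬ (i ≤ n) := by omega
      simp only [h1', h2', if_false]
      have : i + 1 - n = (i - n) + 1 := by omega
      rw [this]
      exact hds (i - n) (by omega)

lemma chainTo_symm {x y : ℍ} {n : ℕ} {c : ℕ → ℍ} (h : ChainTo x y n c) :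
    ChainTo y x n (fun i => c (n - i)) := by
  obtain ⟨hc0, hcn, hcs⟩ := h
  refine ⟨by simpa using hcn, by simpa using hc0, ?_⟩
  intro i hi
  have h1 : n - i = (n - (i+1)) + 1 := by omega
  show dist (c (n - i)) (c (n - (i+1))) ≤ 1
  rw [dist_comm, h1]
  exact hcs _ (by omega)

lemma arsinh_le_self {t : ℝ} (ht : 0 ≤ t) : arsinh t ≤ t := by
  rcases eq_or_lt_of_le ht with h | h
  · simp [← h]
  · calc arsinh t ≤ arsinh (sinh t) := Real.arsinh_le_arsinh.2 (Real.self_lt_sinh_iff.2 h).le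
      _ = t := Real.arsinh_sinh t

/-- Vertical chain: from `a + b i` up to `a + h i`. -/
lemma chainTo_vertical (a b h : ℝ) (hb : 0 < b) (hbh : b ≤ h) :
    ∃ n : ℕ, ∃ c : ℕ → ℍ,
      ChainTo (mk ⟨a, b⟩ hb) (mk ⟨a, h⟩ (lt_of_lt_of_le hb hbh)) n c ∧
      (n : ℝ) ≤ Real.log (h / b) + 1 := by
  set L : ℝ := Real.log (h / b) with hL
  have hL0 : 0 ≤ L := Real.log_nonneg ((one_le_div hb).2 hbh)
  set n : ℕ := ⌈L⌉₊ with hn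
  set δ : ℝ := L / n with hδ
  have hδ0 : 0 ≤ δ := by positivity
  refine ⟨n, fun j => mk ⟨a, b * Real.exp (j * δ)⟩ (by show (0:ℝ) < b * Real.exp (↑j * δ); positivity), ?_, ?_⟩
  · refine ⟨by ext1; simp, ?_, ?_⟩
    · by_cases h0 : n = 0
      · have : L = 0 := by
          have := Nat.le_ceil L
          rw [← hn, h0] at this
          exact le_antisymm (by exact_mod_cast this) hL0
        have hhb : h = b := by
          by_contra hne
          have hlt : b < h := lt_of_le_of_ne hbh (Ne.symm hne)
          have : 0 < L := Real.log_pos ((one_lt_div hb).2 hlt)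
          linarith
        ext1
        simp [h0, hhb]
      · have hnR : (0:ℝ) < n := by exact_mod_cast Nat.pos_of_ne_zero h0
        have : (n : ℝ) * δ = L := by rw [hδ, mul_div_cancel₀]; exact hnR.ne'
        ext1
        simp only [coe_mk]
        have : b * Real.exp (n * δ) = h := by
          rw [this, hL, Real.exp_log (div_pos (hb.trans_le hbh) hb), mul_div_cancel₀]
          exact hb.ne'
        simp [this]
    · intro i hi
      rw [UpperHalfPlane.dist_of_re_eq (by simp)]
      have him : ∀ j : ℕ, (mk (⟨a, b * Real.exp (j * δ)⟩:ℂ) (by positivity)).im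
          = b * Real.exp (j * δ) := fun j => rfl
      rw [him, him, Real.dist_eq,
        Real.log_mul hb.ne' (Real.exp_ne_zero _), Real.log_mul hb.ne' (Real.exp_ne_zero _),
        Real.log_exp, Real.log_exp]
      have : (i : ℝ) * δ - ((i:ℝ) + 1) * δ = -δ := by ring
      have h2 : Real.log b + (i:ℝ) * δ - (Real.log b + ((i:ℝ)+1) * δ) = -δ := by ring
      push_cast
      rw [h2, abs_neg, abs_of_nonneg hδ0]
      -- δ ≤ 1
      have hnn : n ≠ 0 := by
        intro h0; rw [h0] at hi; omega
      have hnR : (0:ℝ) < n := by exact_mod_cast Nat.pos_of_ne_zero hnn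
      rw [hδ, div_le_one hnR]
      exact Nat.le_ceil L
  · calc (n : ℝ) = (⌈L⌉₊ : ℝ) := by rw [hn]
      _ ≤ L + 1 := by
          have := Nat.ceil_lt_add_one hL0
          linarith

/-- Horizontal step at height `h`. -/
lemma dist_horizontal (a a' h : ℝ) (hh : 0 < h) :
    dist (mk ⟨a, h⟩ hh) (mk ⟨a', h⟩ hh) ≤ |a - a'| / h := by
  rw [UpperHalfPlane.dist_eq]
  have him : (mk (⟨a, h⟩:ℂ) hh).im = h := rfl
  have him' : (mk (⟨a', h⟩:ℂ) hh).im = h := rfl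
  have hd : dist ((mk (⟨a, h⟩:ℂ) hh : ℍ) : ℂ) ((mk (⟨a', h⟩:ℂ) hh : ℍ) : ℂ) = |a - a'| := by
    rw [coe_mk, coe_mk, Complex.dist_of_im_eq (show (⟨a,h⟩:ℂ).im = (⟨a',h⟩:ℂ).im from rfl)]
    exact Real.dist_eq a a'
  rw [hd, him, him', Real.sqrt_mul_self hh.le]
  have h1 : |a - a'| / (2 * h) ≥ 0 := by positivity
  calc 2 * arsinh (|a - a'| / (2 * h)) ≤ 2 * (|a - a'| / (2 * h)) := by
        have := arsinh_le_self h1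
        linarith
    _ = |a - a'| / h := by field_simp

lemma log_add_one_le_arsinh {t : ℝ} (ht : 0 ≤ t) : Real.log (1 + t) ≤ arsinh t := by
  rw [Real.arsinh]
  apply Real.log_le_log (by linarith)
  have : (1:ℝ) ≤ √(1 + t ^ 2) := by
    nlinarith [Real.sq_sqrt (show (0:ℝ) ≤ 1 + t ^ 2 by positivity), Real.sqrt_nonneg (1 + t ^ 2)]
  linarith

/-- The key geometric estimate: `log (h/b) + log (h/b') ≤ dist x y + 4`. -/
lemma log_taxi_le (x y : UpperHalfPlane) :
    Real.log ((|x.re - y.re| + x.im + y.im) / x.im)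
      + Real.log ((|x.re - y.re| + x.im + y.im) / y.im) ≤ dist x y + 4 := by
  set b : ℝ := x.im with hb
  set b' : ℝ := y.im with hb'
  have hb0 : 0 < b := x.im_pos
  have hb'0 : 0 < b' := y.im_pos
  set Δ : ℝ := |x.re - y.re| with hΔ
  have hΔ0 : 0 ≤ Δ := abs_nonneg _
  set u : ℝ := dist (x : ℂ) (y : ℂ) with hu
  have hu0 : 0 ≤ u := dist_nonneg
  set s : ℝ := √(b * b') with hs
  have hs0 : 0 < s := Real.sqrt_pos.2 (by positivity)
  set h : ℝ := Δ + b + b' with hh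
  have hh0 : 0 < h := by positivity
  -- Δ ≤ u
  have hΔu : Δ ≤ u := by
    rw [hu, Complex.dist_eq, hΔ]
    have : x.re - y.re = ((x : ℂ) - (y : ℂ)).re := by
      simp [Complex.sub_re, UpperHalfPlane.coe_re]
    rw [this]
    exact Complex.abs_re_le_norm _
  -- |b - b'| ≤ u
  have hbu : |b - b'| ≤ u := by
    rw [hu, Complex.dist_eq, hb, hb']
    have : x.im - y.im = ((x : ℂ) - (y : ℂ)).im := by
      simp [Complex.sub_im, UpperHalfPlane.coe_im]
    rw [this]
    exact Complex.abs_im_le_norm _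
  -- b + b' ≤ 2s + u
  have key1 : b + b' ≤ 2 * s + u := by
    have hsb : √b * √b' = s := (Real.sqrt_mul hb0.le b').symm
    have h1 : (√b) ^ 2 = b := Real.sq_sqrt hb0.le
    have h2 : (√b') ^ 2 = b' := Real.sq_sqrt hb'0.le
    rcases le_total b b' with hbb | hbb
    · have : b' - b ≤ u := (le_abs_self _).trans (by rwa [abs_sub_comm] at hbu)
      have hsq : √b ≤ √b' := Real.sqrt_le_sqrt hbb
      nlinarith [Real.sqrt_nonneg b, Real.sqrt_nonneg b']
    · have : b - b' ≤ u := (le_abs_self _).trans hbu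
      have hsq : √b' ≤ √b := Real.sqrt_le_sqrt hbb
      nlinarith [Real.sqrt_nonneg b, Real.sqrt_nonneg b']
  have hkey : h ≤ 2 * (2 * s + u) := by
    rw [hh]; nlinarith
  -- lower bound on dist
  have hd : 2 * (Real.log (2 * s + u) - Real.log (2 * s)) ≤ dist x y := by
    rw [UpperHalfPlane.dist_eq, ← hu, ← hb, ← hb', ← hs]
    have h1 : Real.log (2 * s + u) - Real.log (2 * s) = Real.log (1 + u / (2 * s)) := by
      rw [← Real.log_div (by positivity) (by positivity)]
      congr 1
      field_simp
    rw [h1]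
    have := log_add_one_le_arsinh (t := u / (2 * s)) (by positivity)
    linarith
  have hlog2 : Real.log h ≤ Real.log 2 + Real.log (2 * s + u) := by
    rw [← Real.log_mul (by norm_num) (by positivity)]
    exact Real.log_le_log hh0 hkey
  have hlogs : Real.log (2 * s) = Real.log 2 + (Real.log b + Real.log b') / 2 := by
    rw [Real.log_mul (by norm_num) hs0.ne', hs, Real.log_sqrt (by positivity),
      Real.log_mul hb0.ne' hb'0.ne']
  have hL2 : Real.log 2 < 0.6931471808 := Real.log_two_lt_d9
  have e1 : Real.log (h / b) = Real.log h - Real.log b := Real.log_div hh0.ne' hb0.ne'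
  have e2 : Real.log (h / b') = Real.log h - Real.log b' := Real.log_div hh0.ne' hb'0.ne'
  rw [e1, e2]
  have : Real.log (2 * s + u) ≥ Real.log h - Real.log 2 := by linarith
  linarith

lemma chainTo_single {p q : UpperHalfPlane} (h : dist p q ≤ 1) :
    ChainTo p q 1 (fun i => if i = 0 then p else q) := by
  refine ⟨by simp, by simp, ?_⟩
  intro i hi
  have : i = 0 := by omega
  subst this
  simpa using h

lemma exists_chain (x y : UpperHalfPlane) :
    ∃ n : ℕ, ∃ c : ℕ → UpperHalfPlane, ChainTo x y n c ∧ (n : ℝ) ≤ dist x y + 7 := by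
  have hb0 : 0 < x.im := x.im_pos
  have hb'0 : 0 < y.im := y.im_pos
  have hΔ0 : (0:ℝ) ≤ |x.re - y.re| := abs_nonneg _
  set h : ℝ := |x.re - y.re| + x.im + y.im with hh
  have hh0 : 0 < h := by positivity
  obtain ⟨n₁, c₁, hc₁, hn₁⟩ := chainTo_vertical x.re x.im h hb0 (by rw [hh]; linarith)
  obtain ⟨n₃, c₃, hc₃, hn₃⟩ := chainTo_vertical y.re y.im h hb'0 (by rw [hh]; linarith)
  have hx : mk ⟨x.re, x.im⟩ hb0 = x := by
    ext1
    rw [coe_mk]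
    exact Complex.ext rfl rfl
  have hy : mk ⟨y.re, y.im⟩ hb'0 = y := by
    ext1
    rw [coe_mk]
    exact Complex.ext rfl rfl
  rw [hx] at hc₁
  rw [hy] at hc₃
  have hstep : dist (mk ⟨x.re, h⟩ hh0) (mk ⟨y.re, h⟩ hh0) ≤ 1 := by
    refine (dist_horizontal _ _ _ hh0).trans ?_
    rw [div_le_one hh0, hh]
    linarith
  have hchain2 := chainTo_single hstep
  have hc₃' := chainTo_symm hc₃
  have A := chainTo_trans hc₁ hchain2
  have B := chainTo_trans A hc₃'
  refine ⟨n₁ + 1 + n₃, _, B, ?_⟩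
  have hlog := log_taxi_le x y
  push_cast
  linarith


abbrev SL2R := Matrix.SpecialLinearGroup (Fin 2) ℝ

lemma finiteness_aux (Γ : Subgroup SL2R) (K : Set UpperHalfPlane) (S : Set Γ)
    (hS : S = {γ : Γ | ∃ k ∈ K, (γ : SL2R) • k ∈ K}) (hfin : S.Finite)
    (k₀ : UpperHalfPlane) (ρ : ℝ) (hρ : 0 < ρ) (hball : Metric.ball k₀ ρ ⊆ K) (R : ℝ) :
    {γ : Γ | dist ((γ : SL2R) • k₀) k₀ ≤ R}.Finite := by
  by_contra hinf
  have hinf' : {γ : Γ | dist ((γ : SL2R) • k₀) k₀ ≤ R}.Infinite := hinf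
  set e := hinf'.natEmbedding with he
  set γ : ℕ → Γ := fun n => (e n : Γ) with hγ
  have hγinj : Function.Injective γ := fun a b hab => by
    have := e.injective (Subtype.ext hab)
    exact this
  have hmem : ∀ n, dist ((γ n : SL2R) • k₀) k₀ ≤ R := fun n => (e n).2
  have hball' : ∀ n, ((γ n : SL2R) • k₀) ∈ Metric.closedBall k₀ R := fun n => by
    simpa [Metric.mem_closedBall] using hmem n
  obtain ⟨p, _, φ, hφ, htend⟩ := (isCompact_closedBall k₀ R).tendsto_subseq hball'
  obtain ⟨N, hN⟩ := Metric.tendsto_atTop.1 htend (ρ / 2) (half_pos hρ)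
  set β : ℕ → Γ := fun m => (γ (φ N))⁻¹ * γ (φ (N + m)) with hβ
  have hβinj : Function.Injective β := by
    intro a b hab
    have h1 := mul_left_cancel hab
    have h2 := hφ.injective (hγinj h1)
    omega
  have hβS : ∀ m, β m ∈ S := by
    intro m
    have h1 : dist ((γ (φ (N + m)) : SL2R) • k₀) ((γ (φ N) : SL2R) • k₀) < ρ := by
      calc dist ((γ (φ (N + m)) : SL2R) • k₀) ((γ (φ N) : SL2R) • k₀)
          ≤ dist ((γ (φ (N + m)) : SL2R) • k₀) p + dist p ((γ (φ N) : SL2R) • k₀) :=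
            dist_triangle _ _ _
        _ < ρ / 2 + ρ / 2 := by
            have hA := hN (N + m) (by omega)
            have hB := hN N (le_refl N)
            rw [dist_comm p]
            exact add_lt_add hA hB
        _ = ρ := by ring
    have h2 : dist ((β m : SL2R) • k₀) k₀ < ρ := by
      have : ((β m : Γ) : SL2R) • k₀ = ((γ (φ N) : SL2R))⁻¹ • ((γ (φ (N + m)) : SL2R) • k₀) := by
        rw [hβ]
        push_cast
        rw [mul_smul]
      rw [this]
      have e0 : ((γ (φ N) : SL2R))⁻¹ • ((γ (φ N) : SL2R) • k₀) = k₀ := inv_smul_smul _ _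
      calc dist (((γ (φ N) : SL2R))⁻¹ • ((γ (φ (N + m)) : SL2R) • k₀)) k₀
          = dist (((γ (φ N) : SL2R))⁻¹ • ((γ (φ (N + m)) : SL2R) • k₀))
            (((γ (φ N) : SL2R))⁻¹ • ((γ (φ N) : SL2R) • k₀)) := by rw [e0]
        _ = dist ((γ (φ (N + m)) : SL2R) • k₀) ((γ (φ N) : SL2R) • k₀) := dist_smul _ _ _
        _ < ρ := h1
    rw [hS]
    refine ⟨k₀, hball (Metric.mem_ball_self hρ), hball ?_⟩
    simpa [Metric.mem_ball] using h2
  exact (Set.infinite_of_injective_forall_mem hβinj hβS) hfin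


lemma exists_ball_subset (Γ : Subgroup SL2R) (K : Set UpperHalfPlane) (hK : IsCompact K)
    (hcover : ∀ x : UpperHalfPlane, ∃ γ : Γ, ∃ k ∈ K, (γ : SL2R) • k = x)
    (hcount : Countable Γ) :
    ∃ k₀ : UpperHalfPlane, ∃ ρ : ℝ, 0 < ρ ∧ Metric.ball k₀ ρ ⊆ K := by
  have hU : (⋃ γ : Γ, (fun k => (γ : SL2R) • k) '' K) = Set.univ := by
    ext x
    simp only [Set.mem_iUnion, Set.mem_univ, iff_true, Set.mem_image]
    obtain ⟨γ, k, hk, hγk⟩ := hcover x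
    exact ⟨γ, k, hk, hγk⟩
  have hclosed : ∀ γ : Γ, IsClosed ((fun k => (γ : SL2R) • k) '' K) := fun γ =>
    (hK.image (isometry_smul UpperHalfPlane (γ : SL2R)).continuous).isClosed
  obtain ⟨γ₀, hx⟩ := nonempty_interior_of_iUnion_of_closed hclosed hU
  obtain ⟨x₀, hx₀⟩ := hx
  obtain ⟨ρ, hρ, hball⟩ := Metric.isOpen_iff.1 isOpen_interior x₀ hx₀
  refine ⟨(γ₀ : SL2R)⁻¹ • x₀, ρ, hρ, ?_⟩
  intro y hy
  have hmem : (γ₀ : SL2R) • y ∈ Metric.ball x₀ ρ := by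
    rw [Metric.mem_ball] at hy ⊢
    calc dist ((γ₀ : SL2R) • y) x₀
        = dist ((γ₀ : SL2R) • y) ((γ₀ : SL2R) • ((γ₀ : SL2R)⁻¹ • x₀)) := by
          rw [smul_inv_smul]
      _ = dist y ((γ₀ : SL2R)⁻¹ • x₀) := dist_smul _ _ _
      _ < ρ := hy
  obtain ⟨k, hk, hke⟩ := interior_subset (hball hmem)
  have : k = y := smul_left_cancel _ hke
  rwa [← this]

theorem word_metric_quasi_isometry
    (Γ : Subgroup (Matrix.SpecialLinearGroup (Fin 2) ℝ))
    (K : Set UpperHalfPlane) (hK : IsCompact K)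
    (hcover : ∀ x : UpperHalfPlane, ∃ γ : Γ, ∃ k ∈ K,
      (γ : Matrix.SpecialLinearGroup (Fin 2) ℝ) • k = x)
    (S : Set Γ)
    (hS : S = {γ : Γ | ∃ k ∈ K, (γ : Matrix.SpecialLinearGroup (Fin 2) ℝ) • k ∈ K})
    (hfin : S.Finite) (hgen : Subgroup.closure S = ⊤)
    (r : UpperHalfPlane → Γ)
    (hr : ∀ x : UpperHalfPlane, ∃ k ∈ K,
      ((r x : Γ) : Matrix.SpecialLinearGroup (Fin 2) ℝ) • k = x) :
    ∃ lam C : ℝ, 1 ≤ lam ∧ 0 ≤ C ∧ ∀ x y : UpperHalfPlane,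
      (wordLength S ((r y)⁻¹ * r x) : ℝ) / lam - C ≤ dist x y ∧
        dist x y ≤ lam * (wordLength S ((r y)⁻¹ * r x) : ℝ) + C := by
  classical
  set G := Matrix.SpecialLinearGroup (Fin 2) ℝ with hG
  -- S is symmetric
  have hsym : ∀ s ∈ S, s⁻¹ ∈ S := by
    intro s hs
    rw [hS] at hs ⊢
    obtain ⟨k, hk, hsk⟩ := hs
    refine ⟨(s : G) • k, hsk, ?_⟩
    have hcoe : ((s⁻¹ : Γ) : G) = (s : G)⁻¹ := rfl
    rw [hcoe, inv_smul_smul]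
    exact hk
  have hrepr : ∀ γ : Γ, ∃ l : List Γ, (∀ t ∈ l, t ∈ S) ∧ l.prod = γ := wl_repr hsym hgen
  -- Γ is countable
  haveI : Finite ↥S := hfin.to_subtype
  haveI hcountΓ : Countable Γ := by
    have hsurj : Function.Surjective (fun l : List ↥S => ((l.map Subtype.val).prod : Γ)) := by
      intro γ
      obtain ⟨l, hl, hp⟩ := hrepr γ
      refine ⟨l.pmap (fun t ht => (⟨t, ht⟩ : ↥S)) hl, ?_⟩
      have hmap : (l.pmap (fun t ht => (⟨t, ht⟩ : ↥S)) hl).map Subtype.val = l := by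
        simp [List.map_pmap]
      simp only [hmap]
      exact hp
    exact hsurj.countable
  -- interior ball
  obtain ⟨k₀, ρ, hρ, hball⟩ := exists_ball_subset Γ K hK hcover hcountΓ
  have hk₀K : k₀ ∈ K := hball (Metric.mem_ball_self hρ)
  set D : ℝ := Metric.diam K with hD
  have hD0 : 0 ≤ D := Metric.diam_nonneg
  have hDle : ∀ a ∈ K, ∀ b ∈ K, dist a b ≤ D := fun a ha b hb =>
    Metric.dist_le_diam_of_mem hK.isBounded ha hb
  -- word moves k₀ a bounded distance
  have hgen_move : ∀ s ∈ S, dist ((s : G) • k₀) k₀ ≤ 2 * D := by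
    intro s hs
    rw [hS] at hs
    obtain ⟨k, hk, hsk⟩ := hs
    calc dist ((s : G) • k₀) k₀ ≤ dist ((s : G) • k₀) ((s : G) • k) + dist ((s : G) • k) k₀ :=
          dist_triangle _ _ _
      _ = dist k₀ k + dist ((s : G) • k) k₀ := by rw [dist_smul]
      _ ≤ D + D := add_le_add (hDle _ hk₀K _ hk) (hDle _ hsk _ hk₀K)
      _ = 2 * D := by ring
  have hlist : ∀ l : List Γ, (∀ t ∈ l, t ∈ S) →
      dist (((l.prod : Γ) : G) • k₀) k₀ ≤ 2 * D * l.length := by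
    intro l
    induction l with
    | nil =>
        intro _
        simp
    | cons s t ih =>
        intro hmem
        have hs := hmem s List.mem_cons_self
        have ht : ∀ a ∈ t, a ∈ S := fun a ha => hmem a (List.mem_cons_of_mem _ ha)
        have h1 := ih ht
        have hco : (((s :: t).prod : Γ) : G) • k₀ = (s : G) • (((t.prod : Γ) : G) • k₀) := by
          rw [List.prod_cons]
          have : ((s * t.prod : Γ) : G) = (s : G) * ((t.prod : Γ) : G) := rfl
          rw [this, mul_smul]
        rw [hco]
        calc dist ((s : G) • (((t.prod : Γ) : G) • k₀)) k₀
            ≤ dist ((s : G) • (((t.prod : Γ) : G) • k₀)) ((s : G) • k₀)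
              + dist ((s : G) • k₀) k₀ := dist_triangle _ _ _
          _ = dist (((t.prod : Γ) : G) • k₀) k₀ + dist ((s : G) • k₀) k₀ := by rw [dist_smul]
          _ ≤ 2 * D * t.length + 2 * D := add_le_add h1 (hgen_move s hs)
          _ = 2 * D * (s :: t).length := by
              simp [List.length_cons]
              ring
  -- upper bound for dist in terms of word length
  have hupper : ∀ x y : UpperHalfPlane,
      dist x y ≤ 2 * D * (wordLength S ((r y)⁻¹ * r x) : ℝ) + 2 * D := by
    intro x y
    obtain ⟨kx, hkx, hkxe⟩ := hr x
    obtain ⟨ky, hky, hkye⟩ := hr y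
    obtain ⟨l, hl, hlen, hp⟩ := wl_spec (hrepr ((r y)⁻¹ * r x))
    have hmid : dist (((r x : Γ) : G) • k₀) (((r y : Γ) : G) • k₀)
        = dist ((((r y)⁻¹ * r x : Γ) : G) • k₀) k₀ := by
      have hco : (((( r y)⁻¹ * r x : Γ) : G)) • k₀ = ((r y : Γ) : G)⁻¹ • (((r x : Γ) : G) • k₀) := by
        have : ((( r y)⁻¹ * r x : Γ) : G) = ((r y : Γ) : G)⁻¹ * ((r x : Γ) : G) := rfl
        rw [this, mul_smul]
      rw [hco]
      rw [show k₀ = ((r y : Γ) : G)⁻¹ • (((r y : Γ) : G) • k₀) by rw [inv_smul_smul]]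
      rw [dist_smul, inv_smul_smul]
    have hmain : dist ((((r y)⁻¹ * r x : Γ) : G) • k₀) k₀
        ≤ 2 * D * (wordLength S ((r y)⁻¹ * r x) : ℝ) := by
      have := hlist l hl
      rw [hp] at this
      rw [← hlen]
      exact_mod_cast this
    calc dist x y = dist (((r x : Γ) : G) • kx) (((r y : Γ) : G) • ky) := by rw [hkxe, hkye]
      _ ≤ dist (((r x : Γ) : G) • kx) (((r x : Γ) : G) • k₀)
          + dist (((r x : Γ) : G) • k₀) (((r y : Γ) : G) • k₀)
          + dist (((r y : Γ) : G) • k₀) (((r y : Γ) : G) • ky) := dist_triangle4 _ _ _ _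
      _ = dist kx k₀ + dist (((r x : Γ) : G) • k₀) (((r y : Γ) : G) • k₀) + dist k₀ ky := by
          rw [dist_smul, dist_smul]
      _ ≤ D + (2 * D * (wordLength S ((r y)⁻¹ * r x) : ℝ)) + D := by
          rw [hmid]
          exact add_le_add (add_le_add (hDle _ hkx _ hk₀K) hmain) (hDle _ hk₀K _ hky)
      _ = 2 * D * (wordLength S ((r y)⁻¹ * r x) : ℝ) + 2 * D := by ring
  -- the finite set F and the bound M
  have hF : {γ : Γ | dist ((γ : G) • k₀) k₀ ≤ 2 * D + 1}.Finite :=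
    finiteness_aux Γ K S hS hfin k₀ ρ hρ hball (2 * D + 1)
  obtain ⟨M, hM⟩ : ∃ M : ℕ, ∀ γ ∈ {γ : Γ | dist ((γ : G) • k₀) k₀ ≤ 2 * D + 1},
      wordLength S γ ≤ M := by
    obtain ⟨M, hM⟩ := (hF.image (wordLength S)).bddAbove
    exact ⟨M, fun γ hγ => hM (Set.mem_image_of_mem _ hγ)⟩
  -- single step bound
  have hstepF : ∀ p q : UpperHalfPlane, dist p q ≤ 1 → wordLength S ((r q)⁻¹ * r p) ≤ M := by
    intro p q hpq
    obtain ⟨kp, hkp, hkpe⟩ := hr p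
    obtain ⟨kq, hkq, hkqe⟩ := hr q
    set β : Γ := (r q)⁻¹ * r p with hβ
    have hco : ((β : Γ) : G) • kp = ((r q : Γ) : G)⁻¹ • p := by
      have : ((β : Γ) : G) = ((r q : Γ) : G)⁻¹ * ((r p : Γ) : G) := rfl
      rw [this, mul_smul, hkpe]
    have h2 : dist (((β : Γ) : G) • kp) kq ≤ 1 := by
      rw [hco]
      rw [show kq = ((r q : Γ) : G)⁻¹ • (((r q : Γ) : G) • kq) by rw [inv_smul_smul]]
      rw [dist_smul, hkqe]
      exact hpq
    have h3 : dist (((β : Γ) : G) • k₀) k₀ ≤ 2 * D + 1 := by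
      calc dist (((β : Γ) : G) • k₀) k₀
          ≤ dist (((β : Γ) : G) • k₀) (((β : Γ) : G) • kp) + dist (((β : Γ) : G) • kp) kq
            + dist kq k₀ := dist_triangle4 _ _ _ _
        _ = dist k₀ kp + dist (((β : Γ) : G) • kp) kq + dist kq k₀ := by rw [dist_smul]
        _ ≤ D + 1 + D := add_le_add (add_le_add (hDle _ hk₀K _ hkp) h2) (hDle _ hkq _ hk₀K)
        _ = 2 * D + 1 := by ring
    exact hM β h3
  -- chain bound
  have hchain_wl : ∀ n : ℕ, ∀ c : ℕ → UpperHalfPlane,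
      (∀ i < n, dist (c i) (c (i + 1)) ≤ 1) →
      wordLength S ((r (c n))⁻¹ * r (c 0)) ≤ M * n := by
    intro n
    induction n with
    | zero =>
        intro c _
        have : (r (c 0))⁻¹ * r (c 0) = 1 := inv_mul_cancel _
        rw [this]
        have h0 : wordLength S (1 : Γ) ≤ ([] : List Γ).length := wl_le [] (by simp) (by simp)
        simpa using h0
    | succ n ih =>
        intro c hc
        have hsplit : (r (c (n + 1)))⁻¹ * r (c 0)
            = ((r (c (n + 1)))⁻¹ * r (c n)) * ((r (c n))⁻¹ * r (c 0)) := by group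
        rw [hsplit]
        calc wordLength S (((r (c (n + 1)))⁻¹ * r (c n)) * ((r (c n))⁻¹ * r (c 0)))
            ≤ wordLength S ((r (c (n + 1)))⁻¹ * r (c n))
              + wordLength S ((r (c n))⁻¹ * r (c 0)) := wl_mul_le (hrepr _) (hrepr _)
          _ ≤ M + M * n := add_le_add
              (hstepF (c n) (c (n + 1)) (hc n (by omega)))
              (ih c (fun i hi => hc i (by omega)))
          _ = M * (n + 1) := by ring
  -- lower bound for dist
  have hlower : ∀ x y : UpperHalfPlane,
      (wordLength S ((r y)⁻¹ * r x) : ℝ) ≤ M * (dist x y + 7) := by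
    intro x y
    obtain ⟨n, c, ⟨hc0, hcn, hcs⟩, hn⟩ := exists_chain x y
    have h1 : wordLength S ((r y)⁻¹ * r x) ≤ M * n := by
      have := hchain_wl n c hcs
      rwa [hc0, hcn] at this
    have h2 : (wordLength S ((r y)⁻¹ * r x) : ℝ) ≤ (M : ℝ) * n := by exact_mod_cast h1
    have hM0 : (0 : ℝ) ≤ M := Nat.cast_nonneg M
    nlinarith [hn]
  -- final constants
  refine ⟨2 * D + (M : ℝ) + 2, 7 * (M : ℝ) + 2 * D + 2,
      by linarith [hD0, (Nat.cast_nonneg M : (0:ℝ) ≤ (M:ℝ))], by positivity, ?_⟩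
  intro x y
  set w : ℝ := (wordLength S ((r y)⁻¹ * r x) : ℝ) with hw
  have hw0 : 0 ≤ w := Nat.cast_nonneg _
  have hM0 : (0 : ℝ) ≤ M := Nat.cast_nonneg M
  have hd0 : 0 ≤ dist x y := dist_nonneg
  have hlam : (0 : ℝ) < 2 * D + (M : ℝ) + 2 := by positivity
  constructor
  · have h1 : w ≤ (2 * D + (M : ℝ) + 2) * (dist x y + (7 * (M : ℝ) + 2 * D + 2)) := by
      have := hlower x y
      nlinarith [mul_nonneg hD0 hd0, mul_nonneg hM0 hd0, mul_nonneg hD0 hM0]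
    have h2 : w / (2 * D + (M : ℝ) + 2) ≤ dist x y + (7 * (M : ℝ) + 2 * D + 2) := by
      rw [div_le_iff₀ hlam]
      linarith [h1]
    linarith
  · have := hupper x y
    nlinarith [mul_nonneg hM0 hw0, mul_nonneg hD0 hw0]
end

section
/- Let Γ be a subgroup of SL(2,ℝ) acting on the upper half-plane ℍ by Möbius transformations. Suppose there is a compact subset K of ℍ such that ℍ = ⋃_{γ ∈ Γ} γ·K, and suppose the set S = { γ ∈ Γ : γ·K ∩ K ≠ ∅ } is finite and generates Γ. Let l : Γ → ℕ be the word length with respect to S. Then there exist a real number c > 0 and N_0 ∈ ℕ such that for all natural numbers N ≥ N_0, the number of elements γ ∈ Γ with l(γ) ≤ N is at least e^{cN}. -/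
namespace WLAux

variable {G : Type*} [Group G] {S : Set G}

/-- If `S` is symmetric, contains 1 and generates, every element is a product of a list in `S`. -/
theorem exists_list (hsymm : ∀ s ∈ S, s⁻¹ ∈ S) (hgen : Subgroup.closure S = ⊤) (γ : G) :
    ∃ l : List G, (∀ s ∈ l, s ∈ S) ∧ l.prod = γ := by
  have hγ : γ ∈ Subgroup.closure S := by rw [hgen]; trivial
  induction hγ using Subgroup.closure_induction with
  | mem x hx => exact ⟨[x], by simpa using hx⟩
  | one => exact ⟨[], by simp⟩
  | mul x y _ _ hx hy =>
    obtain ⟨l1, h1, p1⟩ := hx; obtain ⟨l2, h2, p2⟩ := hy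
    exact ⟨l1 ++ l2, by
      constructor
      · intro s hs; rcases List.mem_append.1 hs with h | h; exacts [h1 s h, h2 s h]
      · simp [p1, p2]⟩
  | inv x _ hx =>
    obtain ⟨l, h1, p1⟩ := hx
    refine ⟨(l.map (·⁻¹)).reverse, ?_, ?_⟩
    · intro s hs
      simp only [List.mem_reverse, List.mem_map] at hs
      obtain ⟨a, ha, rfl⟩ := hs
      exact hsymm a (h1 a ha)
    · rw [← List.prod_inv_reverse, p1]

theorem wordLength_spec (hsymm : ∀ s ∈ S, s⁻¹ ∈ S) (hgen : Subgroup.closure S = ⊤) (γ : G) :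
    ∃ l : List G, (∀ s ∈ l, s ∈ S) ∧ l.length = wordLength S γ ∧ l.prod = γ := by
  have hne : {N : ℕ | ∃ l : List G, (∀ s ∈ l, s ∈ S) ∧ l.length = N ∧ l.prod = γ}.Nonempty := by
    obtain ⟨l, h1, h2⟩ := exists_list hsymm hgen γ
    exact ⟨l.length, l, h1, rfl, h2⟩
  exact Nat.sInf_mem hne

theorem wordLength_le {γ : G} {l : List G} (h1 : ∀ s ∈ l, s ∈ S) (h2 : l.prod = γ) :
    wordLength S γ ≤ l.length :=
  Nat.sInf_le ⟨l, h1, rfl, h2⟩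

theorem wordLength_mul_le (hsymm : ∀ s ∈ S, s⁻¹ ∈ S) (hgen : Subgroup.closure S = ⊤) (a b : G) :
    wordLength S (a * b) ≤ wordLength S a + wordLength S b := by
  obtain ⟨l1, h1, len1, p1⟩ := wordLength_spec hsymm hgen a
  obtain ⟨l2, h2, len2, p2⟩ := wordLength_spec hsymm hgen b
  have := wordLength_le (S := S) (γ := a * b) (l := l1 ++ l2)
    (fun s hs => by rcases List.mem_append.1 hs with h | h; exacts [h1 s h, h2 s h])
    (by simp [p1, p2])
  simpa [len1, len2] using this

/-- Finiteness of word balls. -/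
theorem ball_finite (hfin : S.Finite) (hone : (1 : G) ∈ S) (N : ℕ) :
    {γ : G | ∃ l : List G, (∀ s ∈ l, s ∈ S) ∧ l.length ≤ N ∧ l.prod = γ}.Finite := by
  induction N with
  | zero =>
    refine Set.Finite.subset (Set.finite_singleton 1) ?_
    rintro γ ⟨l, -, hlen, rfl⟩
    interval_cases h : l.length
    · simp [List.length_eq_zero_iff.1 h]
  | succ N ih =>
    refine Set.Finite.subset ((hfin.image2 (· * ·) ih).insert 1) ?_
    rintro γ ⟨l, hl, hlen, rfl⟩
    cases l with
    | nil => simp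
    | cons s t =>
      right
      exact ⟨s, hl s (by simp), t.prod,
        ⟨t, fun x hx => hl x (by simp [hx]), by simpa using hlen, rfl⟩, by simp⟩

theorem wordLength_ball_finite (hsymm : ∀ s ∈ S, s⁻¹ ∈ S) (hgen : Subgroup.closure S = ⊤)
    (hfin : S.Finite) (hone : (1 : G) ∈ S) (N : ℕ) :
    {γ : G | wordLength S γ ≤ N}.Finite := by
  refine Set.Finite.subset (ball_finite hfin hone N) ?_
  intro γ hγ
  obtain ⟨l, h1, h2, h3⟩ := wordLength_spec hsymm hgen γ
  exact ⟨l, h1, h2.le.trans hγ, h3⟩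

end WLAux
open UpperHalfPlane Metric Real
open scoped UpperHalfPlane MatrixGroups

namespace HypAux

/-- The point `x + i h` of the upper half plane (junk value if `h ≤ 0`). -/
noncomputable def pt (x : ℝ) (h : ℝ) : ℍ :=
  if hh : 0 < h then UpperHalfPlane.mk ⟨x, h⟩ hh else default

lemma pt_def (x h : ℝ) (hh : 0 < h) : pt x h = UpperHalfPlane.mk ⟨x, h⟩ hh := dif_pos hh

lemma pt_re (x h : ℝ) (hh : 0 < h) : (pt x h).re = x := by rw [pt_def x h hh]; rfl
lemma pt_im (x h : ℝ) (hh : 0 < h) : (pt x h).im = h := by rw [pt_def x h hh]; rfl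

lemma dist_coe_pt (x y a : ℝ) (ha : 0 < a) :
    dist ((pt x a : ℍ) : ℂ) ((pt y a : ℍ) : ℂ) = |x - y| := by
  rw [pt_def x a ha, pt_def y a ha,
    show ((UpperHalfPlane.mk ⟨x, a⟩ ha : ℍ) : ℂ) = (⟨x, a⟩ : ℂ) from rfl,
    show ((UpperHalfPlane.mk ⟨y, a⟩ ha : ℍ) : ℂ) = (⟨y, a⟩ : ℂ) from rfl,
    Complex.dist_of_im_eq (show (⟨x, a⟩ : ℂ).im = (⟨y, a⟩ : ℂ).im from rfl)]
  exact Real.dist_eq x y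

lemma dist_vert (x a b : ℝ) (ha : 0 < a) (hab : b = 2 * a) :
    dist (pt x a) (pt x b) ≤ 1 := by
  have hb : 0 < b := by rw [hab]; linarith
  rw [dist_of_re_eq (show (pt x a).re = (pt x b).re by rw [pt_re x a ha, pt_re x b hb])]
  rw [pt_im x a ha, pt_im x b hb, hab, Real.dist_eq, Real.log_mul (by norm_num) ha.ne']
  rw [show Real.log a - (Real.log 2 + Real.log a) = -(Real.log 2) by ring, abs_neg,
    abs_of_nonneg (Real.log_nonneg (by norm_num))]
  calc Real.log 2 ≤ Real.log (Real.exp 1) := by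
        apply Real.log_le_log (by norm_num)
        linarith [Real.add_one_le_exp (1:ℝ)]
    _ = 1 := Real.log_exp 1

lemma dist_horiz (x y H : ℝ) (hH : 0 < H) (h : |x - y| ≤ H) :
    dist (pt x H) (pt y H) ≤ 1 := by
  refine (dist_le_dist_coe_div_sqrt _ _).trans ?_
  rw [dist_coe_pt x y H hH, pt_im x H hH, pt_im y H hH, Real.sqrt_mul_self hH.le]
  exact div_le_one_of_le₀ h hH.le

lemma dist_sep (x y : ℝ) :
    Real.log (1 + |x - y|) ≤ dist (pt x 1) (pt y 1) := by
  have h := dist_coe_le (pt x 1) (pt y 1)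
  rw [pt_im y 1 one_pos, one_mul, dist_coe_pt x y 1 one_pos] at h
  have h3 : 1 + |x - y| ≤ Real.exp (dist (pt x 1) (pt y 1)) := by linarith
  calc Real.log (1 + |x-y|) ≤ Real.log (Real.exp _) := Real.log_le_log (by positivity) h3
    _ = _ := Real.log_exp _

end HypAux

open UpperHalfPlane Metric Real HypAux WLAux
open scoped UpperHalfPlane MatrixGroups

set_option maxHeartbeats 2000000 in
theorem exponential_growth_of_cocompact_lattice
    (Γ : Subgroup (Matrix.SpecialLinearGroup (Fin 2) ℝ))
    (K : Set UpperHalfPlane) (hK : IsCompact K)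
    (hcover : ∀ x : UpperHalfPlane, ∃ γ : Γ, ∃ k ∈ K,
      (γ : Matrix.SpecialLinearGroup (Fin 2) ℝ) • k = x)
    (S : Set Γ)
    (hS : S = {γ : Γ | ∃ k ∈ K, (γ : Matrix.SpecialLinearGroup (Fin 2) ℝ) • k ∈ K})
    (hfin : S.Finite) (hgen : Subgroup.closure S = ⊤) :
    ∃ (c : ℝ) (N₀ : ℕ), 0 < c ∧ ∀ N : ℕ, N₀ ≤ N →
      Real.exp (c * N) ≤ ({γ : Γ | wordLength S γ ≤ N}.ncard : ℝ) := by
  classical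
  -- basic facts about S
  have hsymm : ∀ s ∈ S, s⁻¹ ∈ S := by
    intro s hs
    rw [hS] at hs ⊢
    obtain ⟨k, hk, hsk⟩ := hs
    refine ⟨(s : SL(2,ℝ)) • k, hsk, ?_⟩
    have : ((s⁻¹ : Γ) : SL(2,ℝ)) = (s : SL(2,ℝ))⁻¹ := rfl
    rw [this, inv_smul_smul]
    exact hk
  -- Γ is countable
  have hcount : Countable Γ := by
    have : Countable {x : Γ // x ∈ S} := (hfin.countable).to_subtype
    have hsurj : Function.Surjective (fun l : List {x : Γ // x ∈ S} => (l.map Subtype.val).prod) := by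
      intro γ
      obtain ⟨l, hl, hp⟩ := exists_list hsymm hgen γ
      -- build a subtype list
      have : ∀ l : List Γ, (∀ s ∈ l, s ∈ S) →
          ∃ l' : List {x : Γ // x ∈ S}, (l'.map Subtype.val).prod = l.prod := by
        intro l
        induction l with
        | nil => exact fun _ => ⟨[], by simp⟩
        | cons a t ih =>
          intro h
          obtain ⟨t', ht'⟩ := ih (fun s hs => h s (by simp [hs]))
          exact ⟨⟨a, h a (by simp)⟩ :: t', by simp [ht']⟩
      obtain ⟨l', hl'⟩ := this l hl
      refine ⟨l', ?_⟩
      show (List.map Subtype.val l').prod = γ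
      rw [hl', hp]
    exact hsurj.countable
  -- Baire: find an interior point of a translate of K
  obtain ⟨γ₁, x₀, hx₀⟩ : ∃ γ₁ : Γ, ∃ x₀, x₀ ∈ interior ((fun y => (γ₁ : SL(2,ℝ)) • y) '' K) := by
    have hclosed : ∀ γ : Γ, IsClosed ((fun y => (γ : SL(2,ℝ)) • y) '' K) := fun γ =>
      (hK.image (isometry_smul ℍ (γ : SL(2,ℝ))).continuous).isClosed
    have hcov : ⋃ γ : Γ, (fun y => (γ : SL(2,ℝ)) • y) '' K = Set.univ := by
      refine Set.eq_univ_of_forall fun x => ?_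
      obtain ⟨γ, k, hk, hγk⟩ := hcover x
      exact Set.mem_iUnion.2 ⟨γ, k, hk, hγk⟩
    obtain ⟨γ₁, h⟩ := nonempty_interior_of_iUnion_of_closed hclosed hcov
    exact ⟨γ₁, h⟩
  set g₁ : SL(2,ℝ) := (γ₁ : SL(2,ℝ)) with hg₁
  set z₀ : ℍ := g₁⁻¹ • x₀ with hz₀def
  have hz₀K : z₀ ∈ K := by
    have := interior_subset hx₀
    obtain ⟨k, hk, hgk⟩ := this
    have : k = z₀ := by rw [hz₀def, ← hgk, inv_smul_smul]
    rwa [← this]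
  obtain ⟨ε, hε, hball⟩ : ∃ ε > 0, ball z₀ ε ⊆ K := by
    obtain ⟨ε, hε, hb⟩ := Metric.mem_nhds_iff.1 (mem_interior_iff_mem_nhds.1 hx₀)
    refine ⟨ε, hε, fun y hy => ?_⟩
    have : g₁ • y ∈ ball x₀ ε := by
      rw [mem_ball] at hy ⊢
      rw [show x₀ = g₁ • z₀ by rw [hz₀def, smul_inv_smul], dist_smul]
      exact hy
    obtain ⟨k, hk, hgk⟩ := hb this
    have hky : k = y := smul_left_cancel g₁ hgk
    rwa [← hky]
  -- 1 ∈ S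
  have hone : (1 : Γ) ∈ S := by
    rw [hS]
    refine ⟨z₀, hz₀K, ?_⟩
    simpa using hz₀K
  -- K is contained in a ball around z₀
  obtain ⟨r, hr⟩ := hK.isBounded.subset_closedBall z₀
  set R₀ : ℝ := max r 0 with hR₀def
  have hR₀0 : 0 ≤ R₀ := le_max_right _ _
  have hR₀ : ∀ k ∈ K, dist k z₀ ≤ R₀ := fun k hk =>
    le_trans (mem_closedBall.1 (hr hk)) (le_max_left _ _)
  -- orbit of z₀ is R₀-dense
  have hdens : ∀ x : ℍ, ∃ γ : Γ, dist ((γ : SL(2,ℝ)) • z₀) x ≤ R₀ := by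
    intro x
    obtain ⟨γ, k, hk, hγk⟩ := hcover x
    refine ⟨γ, ?_⟩
    rw [← hγk, dist_smul, dist_comm]
    exact hR₀ k hk
  -- coercion helper
  have hdist_conj : ∀ a b : Γ, dist z₀ (((a⁻¹ * b : Γ) : SL(2,ℝ)) • z₀)
      = dist ((a : SL(2,ℝ)) • z₀) ((b : SL(2,ℝ)) • z₀) := by
    intro a b
    rw [show ((a⁻¹ * b : Γ) : SL(2,ℝ)) = (a : SL(2,ℝ))⁻¹ * (b : SL(2,ℝ)) from rfl,
      mul_smul, ← dist_smul (a : SL(2,ℝ)) , smul_inv_smul]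
  -- the "large displacement" set is finite
  set D : ℝ := 2 * R₀ + 1 with hD
  have hΓD : {γ : Γ | dist z₀ ((γ : SL(2,ℝ)) • z₀) ≤ D}.Finite := by
    obtain ⟨t, -, htfin, htcov⟩ :=
      finite_cover_balls_of_compact (isCompact_closedBall z₀ D) (half_pos hε)
    have hsub : {γ : Γ | dist z₀ ((γ : SL(2,ℝ)) • z₀) ≤ D} ⊆
        ⋃ c ∈ t, {γ : Γ | (γ : SL(2,ℝ)) • z₀ ∈ ball c (ε/2)} := by
      intro γ hγ
      have hmem : (γ : SL(2,ℝ)) • z₀ ∈ closedBall z₀ D := by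
        rw [mem_closedBall, dist_comm]; exact hγ
      obtain ⟨c, hc1, hc2⟩ := Set.mem_iUnion₂.1 (htcov hmem)
      exact Set.mem_biUnion hc1 hc2
    refine Set.Finite.subset (Set.Finite.biUnion htfin ?_) hsub
    intro c _
    by_cases hne : {γ : Γ | (γ : SL(2,ℝ)) • z₀ ∈ ball c (ε/2)}.Nonempty
    · obtain ⟨γc, hγc⟩ := hne
      refine Set.Finite.subset (hfin.image (fun δ => γc * δ)) ?_
      intro γ hγ
      have hdist : dist (((γc⁻¹ * γ : Γ) : SL(2,ℝ)) • z₀) z₀ < ε := by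
        rw [dist_comm, hdist_conj]
        calc dist ((γc : SL(2,ℝ)) • z₀) ((γ : SL(2,ℝ)) • z₀)
            ≤ dist ((γc : SL(2,ℝ)) • z₀) c + dist c ((γ : SL(2,ℝ)) • z₀) := dist_triangle _ _ _
          _ < ε/2 + ε/2 := by
              have h1 := mem_ball.1 hγc
              have h2 := mem_ball.1 hγ
              rw [dist_comm c ((γ : SL(2,ℝ)) • z₀)]
              linarith [h2]
          _ = ε := by ring
      have hδS : (γc⁻¹ * γ) ∈ S := by
        rw [hS]
        exact ⟨z₀, hz₀K, hball (mem_ball.2 hdist)⟩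
      exact ⟨γc⁻¹ * γ, hδS, by group⟩
    · rw [Set.not_nonempty_iff_eq_empty] at hne
      rw [hne]
      exact Set.finite_empty
  -- the constant C
  obtain ⟨C, hC⟩ : ∃ C : ℕ, ∀ γ : Γ, dist z₀ ((γ : SL(2,ℝ)) • z₀) ≤ D → wordLength S γ ≤ C := by
    obtain ⟨C, hC⟩ := (hΓD.image (wordLength S)).bddAbove
    exact ⟨C, fun γ hγ => hC (Set.mem_image_of_mem _ hγ)⟩
  -- the basic step inequality
  have hW : ∀ x y : ℍ, dist x y ≤ 1 → ∀ γ γ' : Γ,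
      dist ((γ' : SL(2,ℝ)) • z₀) x ≤ R₀ → dist ((γ : SL(2,ℝ)) • z₀) y ≤ R₀ →
      wordLength S γ ≤ wordLength S γ' + C := by
    intro x y hxy γ γ' h1 h2
    have hδ : dist z₀ (((γ'⁻¹ * γ : Γ) : SL(2,ℝ)) • z₀) ≤ D := by
      rw [hdist_conj]
      calc dist ((γ' : SL(2,ℝ)) • z₀) ((γ : SL(2,ℝ)) • z₀)
          ≤ dist ((γ' : SL(2,ℝ)) • z₀) x + dist x y + dist y ((γ : SL(2,ℝ)) • z₀) :=
            dist_triangle4 _ _ _ _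
        _ ≤ R₀ + 1 + R₀ := by
            rw [dist_comm y]
            gcongr
        _ = D := by rw [hD]; ring
    calc wordLength S γ = wordLength S (γ' * (γ'⁻¹ * γ)) := by rw [mul_inv_cancel_left]
      _ ≤ wordLength S γ' + wordLength S (γ'⁻¹ * γ) := wordLength_mul_le hsymm hgen _ _
      _ ≤ wordLength S γ' + C := add_le_add_right (hC _ hδ) _
  -- going up the imaginary axis
  have hpow : ∀ n : ℕ, (0:ℝ) < 2^n := fun n => pow_pos two_pos n
  obtain ⟨γs, hγs⟩ := hdens (pt 0 1)
  set C₀ : ℕ := wordLength S γs with hC₀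
  have hUp : ∀ n : ℕ, ∀ γ : Γ, dist ((γ : SL(2,ℝ)) • z₀) (pt 0 (2^n)) ≤ R₀ →
      wordLength S γ ≤ C₀ + C * (n+1) := by
    intro n
    induction n with
    | zero =>
      intro γ h
      rw [pow_zero] at h
      have := hW (pt 0 1) (pt 0 1) (by simp) γ γs hγs h
      calc wordLength S γ ≤ C₀ + C := this
        _ = C₀ + C * (0+1) := by ring
    | succ n ih =>
      intro γ h
      obtain ⟨γ', hγ'⟩ := hdens (pt 0 (2^n))
      have hstep : dist (pt 0 (2^n)) (pt 0 (2^(n+1))) ≤ 1 :=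
        dist_vert 0 _ _ (hpow n) (by rw [pow_succ]; ring)
      calc wordLength S γ ≤ wordLength S γ' + C := hW _ _ hstep γ γ' hγ' h
        _ ≤ (C₀ + C * (n+1)) + C := add_le_add_left (ih γ' hγ') C
        _ = C₀ + C * (n+1+1) := by ring
  -- the separation constant T
  set T : ℕ := ⌈Real.exp (2*R₀)⌉₊ + 1 with hTdef
  have hTsep : 2*R₀ < Real.log (1 + T) := by
    have h1 : Real.exp (2*R₀) < 1 + (T:ℝ) := by
      have := Nat.le_ceil (Real.exp (2*R₀))
      rw [hTdef]
      push_cast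
      linarith
    calc 2*R₀ = Real.log (Real.exp (2*R₀)) := (Real.log_exp _).symm
      _ < Real.log (1 + T) := Real.log_lt_log (Real.exp_pos _) h1
  have hTT2 : T ≤ 2^T := (Nat.lt_two_pow_self (n := T)).le
  -- target points
  set xk : ℕ → ℝ := fun k => ((k * T : ℕ) : ℝ) with hxk
  -- word length bound for elements near the target points
  have hkbound : ∀ k n : ℕ, xk k ≤ 2^n → ∀ γ : Γ,
      dist ((γ : SL(2,ℝ)) • z₀) (pt (xk k) 1) ≤ R₀ → wordLength S γ ≤ C₀ + C * (2*n+2) := by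
    intro k n hn
    have hDown : ∀ j : ℕ, j ≤ n → ∀ γ : Γ,
        dist ((γ : SL(2,ℝ)) • z₀) (pt (xk k) (2^(n-j))) ≤ R₀ →
        wordLength S γ ≤ C₀ + C * (n+2) + C * j := by
      intro j
      induction j with
      | zero =>
        intro _ γ h
        rw [Nat.sub_zero] at h
        obtain ⟨γ', hγ'⟩ := hdens (pt 0 (2^n))
        have hstep : dist (pt 0 (2^n)) (pt (xk k) (2^n)) ≤ 1 := by
          apply dist_horiz _ _ _ (hpow n)
          rw [show |(0:ℝ) - xk k| = xk k by
            rw [zero_sub, abs_neg, abs_of_nonneg (by rw [hxk]; positivity)]]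
          exact hn
        calc wordLength S γ ≤ wordLength S γ' + C := hW _ _ hstep γ γ' hγ' h
          _ ≤ (C₀ + C * (n+1)) + C := add_le_add_left (hUp n γ' hγ') C
          _ = C₀ + C * (n+2) + C * 0 := by ring
      | succ j ih =>
        intro hj γ h
        obtain ⟨γ', hγ'⟩ := hdens (pt (xk k) (2^(n-j)))
        have hstep : dist (pt (xk k) (2^(n-j))) (pt (xk k) (2^(n-(j+1)))) ≤ 1 := by
          rw [dist_comm]
          apply dist_vert _ _ _ (hpow (n-(j+1)))
          rw [show n - j = (n - (j+1)) + 1 by omega]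
          ring
        calc wordLength S γ ≤ wordLength S γ' + C := hW _ _ hstep γ γ' hγ' h
          _ ≤ (C₀ + C * (n+2) + C * j) + C := add_le_add_left (ih (by omega) γ' hγ') C
          _ = C₀ + C * (n+2) + C * (j+1) := by ring
    intro γ h
    have := hDown n le_rfl γ (by rw [Nat.sub_self, pow_zero]; exact h)
    calc wordLength S γ ≤ C₀ + C * (n+2) + C * n := this
      _ = C₀ + C * (2*n+2) := by ring
  -- the chosen elements
  have hgk : ∀ k : ℕ, ∃ γ : Γ, dist ((γ : SL(2,ℝ)) • z₀) (pt (xk k) 1) ≤ R₀ :=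
    fun k => hdens (pt (xk k) 1)
  choose gk hgkspec using hgk
  -- injectivity
  have hsep : ∀ k k' : ℕ, k ≠ k' → gk k ≠ gk k' := by
    intro k k' hkk' heq
    have h1 := hgkspec k
    have h2 := hgkspec k'
    rw [heq] at h1
    have hd : dist (pt (xk k) 1) (pt (xk k') 1) ≤ 2*R₀ := by
      calc dist (pt (xk k) 1) (pt (xk k') 1)
          ≤ dist (pt (xk k) 1) ((gk k' : SL(2,ℝ)) • z₀)
            + dist ((gk k' : SL(2,ℝ)) • z₀) (pt (xk k') 1) := dist_triangle _ _ _
        _ ≤ R₀ + R₀ := by rw [dist_comm (pt (xk k) 1)]; gcongr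
        _ = 2*R₀ := by ring
    have hlow := dist_sep (xk k) (xk k')
    have habs : (T:ℝ) ≤ |xk k - xk k'| := by
      have hz : (k:ℤ) ≠ (k':ℤ) := by exact_mod_cast hkk'
      have h1le : (1:ℤ) ≤ |(k:ℤ) - k'| := Int.one_le_abs (sub_ne_zero.2 hz)
      have h1r : (1:ℝ) ≤ |(k:ℝ) - k'| := by exact_mod_cast h1le
      have hTpos : (0:ℝ) ≤ (T:ℝ) := Nat.cast_nonneg T
      have hxkk : ∀ j : ℕ, xk j = (j:ℝ) * (T:ℝ) := fun j => by
        simp only [hxk]; push_cast; ring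
      rw [hxkk, hxkk, show (k:ℝ) * (T:ℝ) - (k':ℝ) * (T:ℝ) = ((k:ℝ) - (k':ℝ)) * (T:ℝ) by ring,
        abs_mul, abs_of_nonneg hTpos]
      nlinarith [h1r, hTpos]
    have : Real.log (1 + T) ≤ dist (pt (xk k) 1) (pt (xk k') 1) :=
      le_trans (Real.log_le_log (by positivity) (by linarith)) hlow
    linarith
  -- final counting
  set b : ℕ := 2*C+1 with hb
  set A : ℕ := C₀ + C * (2*T+2) with hA
  refine ⟨Real.log 2 / (2*(b:ℝ)), 2*A + 2*b, ?_, ?_⟩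
  · apply div_pos (Real.log_pos one_lt_two)
    have : 0 < b := by omega
    positivity
  intro N hN
  set m : ℕ := (N - A)/b with hm
  have hA_le : A ≤ N := by omega
  -- all chosen elements for k < 2^m lie in the word ball
  have hwl : ∀ k : ℕ, k ≤ 2^m → wordLength S (gk k) ≤ N := by
    intro k hk
    have hkT : (k*T : ℕ) ≤ 2^(m+T) := by
      calc k*T ≤ 2^m * 2^T := Nat.mul_le_mul hk hTT2
        _ = 2^(m+T) := (pow_add 2 m T).symm
    have hn : xk k ≤ 2^(m+T) := by
      rw [hxk]
      calc ((k*T : ℕ):ℝ) ≤ ((2^(m+T) : ℕ):ℝ) := Nat.cast_le.2 hkT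
        _ = 2^(m+T) := by push_cast; ring
    have hb1 := hkbound k (m+T) hn (gk k) (hgkspec k)
    have harith : C₀ + C * (2*(m+T)+2) ≤ N := by
      have h1 : m * b ≤ N - A := Nat.div_mul_le_self (N-A) b
      calc C₀ + C * (2*(m+T)+2) = A + 2*C*m := by rw [hA]; ring
        _ ≤ A + b*m := by
            have : 2*C*m ≤ b*m := Nat.mul_le_mul_right m (by omega)
            omega
        _ ≤ A + (N - A) := by
            have : b*m ≤ N - A := by rw [mul_comm]; exact h1
            omega
        _ = N := by omega
    exact le_trans hb1 harith
  -- the finite family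
  set F : Finset Γ := (Finset.range (2^m + 1)).image gk with hF
  have hcard : F.card = 2^m + 1 := by
    rw [hF, Finset.card_image_of_injOn, Finset.card_range]
    intro a _ a' _ haa'
    by_contra hne
    exact hsep a a' hne haa'
  have hsubF : ↑F ⊆ {γ : Γ | wordLength S γ ≤ N} := by
    intro γ hγ
    rw [hF] at hγ
    simp only [Finset.coe_image, Set.mem_image, Finset.mem_coe, Finset.mem_range] at hγ
    obtain ⟨k, hk, rfl⟩ := hγ
    exact hwl k (by omega)
  have hballfin := wordLength_ball_finite hsymm hgen hfin hone N
  have hcount2 : (2^m + 1 : ℕ) ≤ {γ : Γ | wordLength S γ ≤ N}.ncard := by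
    rw [← hcard, ← Set.ncard_coe_finset]
    exact Set.ncard_le_ncard hsubF hballfin
  -- compare with the exponential
  have hNle : N ≤ 2*(b*m) := by
    have hb0 : 0 < b := by omega
    have hdm := Nat.div_add_mod (N - A) b
    rw [← hm] at hdm
    have hmod : (N - A) % b < b := Nat.mod_lt _ hb0
    generalize hg : b*m = q at hdm ⊢
    omega
  have hNleR : (N:ℝ) ≤ 2*(b:ℝ)*(m:ℝ) := by
    have h2 : ((N:ℕ):ℝ) ≤ ((2*(b*m) : ℕ) : ℝ) := Nat.cast_le.2 hNle
    push_cast at h2 ⊢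
    linarith
  have hcN : Real.log 2 / (2*(b:ℝ)) * N ≤ (m:ℝ) * Real.log 2 := by
    rw [div_mul_eq_mul_div, div_le_iff₀ (by positivity : (0:ℝ) < 2*(b:ℝ))]
    have hlog := (Real.log_pos one_lt_two).le
    nlinarith [hNleR]
  calc Real.exp (Real.log 2 / (2*(b:ℝ)) * N) ≤ Real.exp ((m:ℝ) * Real.log 2) :=
        Real.exp_le_exp.2 hcN
    _ = 2^m := by rw [Real.exp_nat_mul, Real.exp_log two_pos]
    _ ≤ ((2^m + 1 : ℕ) : ℝ) := by push_cast; linarith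
    _ ≤ _ := Nat.cast_le.2 hcount2
end
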